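/- Consider a finite-horizon linear MDP as in the context. Fix a stage h ∈ {1,…,H}, a real λ > 0, an integer m ≥ 0, triples (s_i, a_i, s'_i) ∈ S × A × S for i = 1,…,m, and a function V' : S → ℝ with 0 ≤ V'(s) ≤ H for all s. Define Σ = λ·I_d + Σ_{i=1}^{m} φ(s_i,a_i) φ(s_i,a_i)ᵀ, b = Σ_{i=1}^{m} φ(s_i,a_i)·(r_h(s_i,a_i) + V'(s'_i)), w = Σ^{−1} b, and E = ‖Σ_{i=1}^{m} φ(s_i,a_i)·(V'(s'_i) − [P_h V'](s_i,a_i))‖_{Σ^{−1}}. Then for every policy π : S × {1,…,H} → A and every (s,a) ∈ S × A: |⟨w, φ(s,a)⟩ − Q^π_h(s,a) − [P_h (V' − V^π_{h+1})](s,a)| ≤ (E + 4H·√(dλ)) · √(φ(s,a)ᵀ Σ^{−1} φ(s,a)). -/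

import Mathlib

open Matrix Finset

section LinearMdpAux

set_option linter.unusedSectionVars false
set_option linter.unusedVariables false

variable {n : Type*} [Fintype n] [DecidableEq n]

lemma LinMdpAux.dot_self_nonneg (v : n → ℝ) : 0 ≤ v ⬝ᵥ v :=
  Finset.sum_nonneg fun i _ => mul_self_nonneg _

lemma LinMdpAux.abs_dot_le (u v : n → ℝ) :
    |u ⬝ᵥ v| ≤ Real.sqrt (u ⬝ᵥ u) * Real.sqrt (v ⬝ᵥ v) := by
  have h := Finset.sum_mul_sq_le_sq_mul_sq Finset.univ u v
  calc |u ⬝ᵥ v| = Real.sqrt ((u ⬝ᵥ v) ^ 2) := (Real.sqrt_sq_eq_abs _).symm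
    _ ≤ Real.sqrt ((u ⬝ᵥ u) * (v ⬝ᵥ v)) := by
        apply Real.sqrt_le_sqrt
        simpa [dotProduct, pow_two, Finset.sum_mul_sum, mul_comm] using h
    _ = _ := Real.sqrt_mul (LinMdpAux.dot_self_nonneg u) _

lemma LinMdpAux.sqrt_dot_add_le (u v : n → ℝ) :
    Real.sqrt ((u + v) ⬝ᵥ (u + v)) ≤ Real.sqrt (u ⬝ᵥ u) + Real.sqrt (v ⬝ᵥ v) := by
  have h1 : (u + v) ⬝ᵥ (u + v) = u ⬝ᵥ u + 2 * (u ⬝ᵥ v) + v ⬝ᵥ v := by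
    simp [add_dotProduct, dotProduct_add, dotProduct_comm v u]; ring
  have h2 : u ⬝ᵥ v ≤ Real.sqrt (u ⬝ᵥ u) * Real.sqrt (v ⬝ᵥ v) :=
    (le_abs_self _).trans (LinMdpAux.abs_dot_le u v)
  have h3 : (u + v) ⬝ᵥ (u + v) ≤ (Real.sqrt (u ⬝ᵥ u) + Real.sqrt (v ⬝ᵥ v)) ^ 2 := by
    rw [h1, add_sq, Real.sq_sqrt (LinMdpAux.dot_self_nonneg u),
      Real.sq_sqrt (LinMdpAux.dot_self_nonneg v)]
    nlinarith
  calc Real.sqrt ((u + v) ⬝ᵥ (u + v))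
      ≤ Real.sqrt ((Real.sqrt (u ⬝ᵥ u) + Real.sqrt (v ⬝ᵥ v)) ^ 2) := Real.sqrt_le_sqrt h3
    _ = _ := Real.sqrt_sq (by positivity)

lemma LinMdpAux.herm_dot_comm {M : Matrix n n ℝ} (hM : M.IsHermitian) (x y : n → ℝ) :
    M.mulVec x ⬝ᵥ y = x ⬝ᵥ M.mulVec y := by
  rw [dotProduct_mulVec, ← mulVec_transpose]
  congr 1
  rw [← conjTranspose_eq_transpose_of_trivial, hM.eq]

lemma LinMdpAux.psd_cauchy_schwarz {M : Matrix n n ℝ} (hM : M.PosSemidef) (x y : n → ℝ) :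
    |x ⬝ᵥ M.mulVec y| ≤ Real.sqrt (x ⬝ᵥ M.mulVec x) * Real.sqrt (y ⬝ᵥ M.mulVec y) := by
  open scoped MatrixOrder in
  have hs : (CFC.sqrt M).PosSemidef := (CFC.sqrt_nonneg M).posSemidef
  open scoped MatrixOrder in
  have key : ∀ a b : n → ℝ, a ⬝ᵥ M.mulVec b = ((CFC.sqrt M).mulVec a) ⬝ᵥ ((CFC.sqrt M).mulVec b) := by
    intro a b
    conv_lhs => rw [← CFC.sqrt_mul_sqrt_self M hM.nonneg]
    rw [← mulVec_mulVec, ← LinMdpAux.herm_dot_comm hs.isHermitian]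
  rw [key x y, key x x, key y y]
  exact LinMdpAux.abs_dot_le _ _

lemma LinMdpAux.vecMulVec_mulVec (a b x : n → ℝ) :
    (vecMulVec a b).mulVec x = (b ⬝ᵥ x) • a := by
  ext j
  simp [Matrix.mulVec, vecMulVec_apply, dotProduct, Finset.mul_sum, mul_assoc, mul_comm,
    Pi.smul_apply, smul_eq_mul, mul_left_comm]

lemma LinMdpAux.sum_mulVec {ι : Type*} (s : Finset ι) (M : ι → Matrix n n ℝ) (x : n → ℝ) :
    (∑ i ∈ s, M i).mulVec x = ∑ i ∈ s, (M i).mulVec x := by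
  ext j
  simp [Matrix.mulVec, dotProduct, Matrix.sum_apply, Finset.sum_mul]
  rw [Finset.sum_comm]

lemma LinMdpAux.dotProduct_sum {ι : Type*} (s : Finset ι) (x : n → ℝ) (f : ι → n → ℝ) :
    x ⬝ᵥ (∑ i ∈ s, f i) = ∑ i ∈ s, x ⬝ᵥ f i := by
  simp only [dotProduct, Finset.sum_apply, Finset.mul_sum]
  rw [Finset.sum_comm]

lemma LinMdpAux.sig_mulVec {m : ℕ} (lam : ℝ) (ψ : Fin m → n → ℝ)
    (Sig : Matrix n n ℝ)
    (hSig : Sig = lam • (1 : Matrix n n ℝ) + ∑ i : Fin m, vecMulVec (ψ i) (ψ i))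
    (x : n → ℝ) :
    Sig.mulVec x = lam • x + ∑ i : Fin m, (ψ i ⬝ᵥ x) • ψ i := by
  rw [hSig]
  simp [Matrix.add_mulVec, LinMdpAux.sum_mulVec, LinMdpAux.vecMulVec_mulVec, smul_mulVec]

lemma LinMdpAux.sig_quad {m : ℕ} (lam : ℝ) (ψ : Fin m → n → ℝ)
    (Sig : Matrix n n ℝ)
    (hSig : Sig = lam • (1 : Matrix n n ℝ) + ∑ i : Fin m, vecMulVec (ψ i) (ψ i))
    (x : n → ℝ) :
    x ⬝ᵥ Sig.mulVec x = lam * (x ⬝ᵥ x) + ∑ i : Fin m, (ψ i ⬝ᵥ x) * (ψ i ⬝ᵥ x) := by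
  rw [LinMdpAux.sig_mulVec lam ψ Sig hSig]
  simp [dotProduct_add, dotProduct_smul, LinMdpAux.dotProduct_sum, dotProduct_comm x (ψ _)]

lemma LinMdpAux.sig_posDef {m : ℕ} (lam : ℝ) (hlam : 0 < lam) (ψ : Fin m → n → ℝ)
    (Sig : Matrix n n ℝ)
    (hSig : Sig = lam • (1 : Matrix n n ℝ) + ∑ i : Fin m, vecMulVec (ψ i) (ψ i)) :
    Sig.PosDef := by
  rw [Matrix.posDef_iff_dotProduct_mulVec]
  constructor
  · show Sigᴴ = Sig
    ext i j
    rw [conjTranspose_apply, star_trivial, hSig]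
    simp [Matrix.add_apply, Matrix.sum_apply, vecMulVec_apply, Matrix.smul_apply,
      Matrix.one_apply, mul_comm]
    rcases eq_or_ne i j with rfl | hij
    · simp
    · simp [hij, Ne.symm hij]
  · intro x hx
    have h1 := LinMdpAux.sig_quad lam ψ Sig hSig x
    have hxx : 0 < x ⬝ᵥ x := by
      rcases Function.ne_iff.mp hx with ⟨j, hj⟩
      have hj' : x j ≠ 0 := by simpa using hj
      have : 0 < x j * x j := mul_self_pos.mpr hj'
      exact lt_of_lt_of_le this (Finset.single_le_sum (fun i _ => mul_self_nonneg (x i))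
        (Finset.mem_univ j))
    have h2 : 0 ≤ ∑ i : Fin m, (ψ i ⬝ᵥ x) * (ψ i ⬝ᵥ x) :=
      Finset.sum_nonneg fun i _ => mul_self_nonneg _
    have : (0:ℝ) < x ⬝ᵥ Sig.mulVec x := by rw [h1]; positivity
    simpa [star_trivial] using this

lemma LinMdpAux.inv_quad_le {M : Matrix n n ℝ} (hM : M.PosDef) {lam : ℝ} (hlam : 0 < lam)
    (hlow : ∀ x : n → ℝ, lam * (x ⬝ᵥ x) ≤ x ⬝ᵥ M.mulVec x) (y : n → ℝ) :
    y ⬝ᵥ M⁻¹.mulVec y ≤ (y ⬝ᵥ y) / lam := by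
  set z := M⁻¹.mulVec y with hz
  have hdet : IsUnit M.det := hM.det_pos.ne'.isUnit
  have hMz : M.mulVec z = y := by
    rw [hz, mulVec_mulVec, Matrix.mul_nonsing_inv _ hdet, one_mulVec]
  set q := y ⬝ᵥ M⁻¹.mulVec y with hq
  have hq1 : q = z ⬝ᵥ M.mulVec z := by rw [hMz, hq, ← hz, dotProduct_comm]
  have hq0 : 0 ≤ q :=
    le_trans (mul_nonneg hlam.le (LinMdpAux.dot_self_nonneg z)) (hq1 ▸ hlow z)
  have hzz : z ⬝ᵥ z ≤ q / lam := by
    have := hlow z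
    rw [← hq1] at this
    rw [le_div_iff₀ hlam]; linarith
  have hcs : q ≤ Real.sqrt (y ⬝ᵥ y) * Real.sqrt (z ⬝ᵥ z) := by
    calc q = y ⬝ᵥ z := rfl
      _ ≤ |y ⬝ᵥ z| := le_abs_self _
      _ ≤ _ := LinMdpAux.abs_dot_le y z
  have h2 : q ≤ Real.sqrt (y ⬝ᵥ y) * Real.sqrt (q / lam) :=
    hcs.trans (mul_le_mul_of_nonneg_left (Real.sqrt_le_sqrt hzz) (Real.sqrt_nonneg _))
  rcases eq_or_lt_of_le hq0 with h0 | hq0'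
  · rw [← h0]; exact div_nonneg (LinMdpAux.dot_self_nonneg y) hlam.le
  · have hrw : Real.sqrt (q / lam) = Real.sqrt q / Real.sqrt lam := Real.sqrt_div hq0 _
    rw [hrw] at h2
    have hsq : 0 < Real.sqrt q := Real.sqrt_pos.mpr hq0'
    have hsl : 0 < Real.sqrt lam := Real.sqrt_pos.mpr hlam
    have h3 : Real.sqrt q ≤ Real.sqrt (y ⬝ᵥ y) / Real.sqrt lam := by
      rw [div_eq_mul_inv]
      have h2' : Real.sqrt q * Real.sqrt q ≤ Real.sqrt (y ⬝ᵥ y) * (Real.sqrt lam)⁻¹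
          * Real.sqrt q := by
        calc Real.sqrt q * Real.sqrt q = q := Real.mul_self_sqrt hq0
          _ ≤ Real.sqrt (y ⬝ᵥ y) * (Real.sqrt q / Real.sqrt lam) := h2
          _ = Real.sqrt (y ⬝ᵥ y) * (Real.sqrt lam)⁻¹ * Real.sqrt q := by ring
      exact le_of_mul_le_mul_right h2' hsq
    calc q = Real.sqrt q * Real.sqrt q := (Real.mul_self_sqrt hq0).symm
      _ ≤ (Real.sqrt (y ⬝ᵥ y) / Real.sqrt lam) * (Real.sqrt (y ⬝ᵥ y) / Real.sqrt lam) :=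
          mul_le_mul h3 h3 hsq.le (by positivity)
      _ = (y ⬝ᵥ y) / lam := by
          rw [div_mul_div_comm, Real.mul_self_sqrt (LinMdpAux.dot_self_nonneg y),
            Real.mul_self_sqrt hlam.le]

end LinearMdpAux


/-- Ridge regression error decomposition in a linear MDP: for any policy `π` and
any `(s,a)`, the linear estimate `⟨w, φ(s,a)⟩` deviates from
`Q^π_h(s,a) + [P_h(V' - V^π_{h+1})](s,a)` by at most
`(E + 4H√(dλ)) √(φ(s,a)ᵀ Σ⁻¹ φ(s,a))`. -/
theorem linear_mdp_regression_error
    {S A : Type*} [Fintype S] [Nonempty S] [Fintype A] [Nonempty A]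
    (d H : ℕ) (hd : 0 < d) (hH : 0 < H)
    (φ : S → A → Fin d → ℝ) (hφ : ∀ s a, Real.sqrt (φ s a ⬝ᵥ φ s a) ≤ 1)
    (μv : ℕ → Fin d → ℝ)
    (hμ : ∀ h ∈ Finset.Icc 1 H, Real.sqrt (μv h ⬝ᵥ μv h) ≤ Real.sqrt d)
    (θ : ℕ → S → Fin d → ℝ)
    (r : ℕ → S → A → ℝ) (hr : ∀ h s a, r h s a = φ s a ⬝ᵥ μv h)
    (hr01 : ∀ h ∈ Finset.Icc 1 H, ∀ s a, r h s a ∈ Set.Icc (0 : ℝ) 1)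
    (P : ℕ → S → A → S → ℝ) (hP : ∀ h s a s', P h s a s' = φ s a ⬝ᵥ θ h s')
    (hPnn : ∀ h ∈ Finset.Icc 1 H, ∀ s a s', 0 ≤ P h s a s')
    (hPsum : ∀ h ∈ Finset.Icc 1 H, ∀ s a, ∑ s' : S, P h s a s' = 1)
    (hθ : ∀ h ∈ Finset.Icc 1 H, ∀ c : S → ℝ,
      Real.sqrt ((∑ s' : S, c s' • θ h s') ⬝ᵥ (∑ s' : S, c s' • θ h s'))
        ≤ Real.sqrt d * ⨆ s' : S, |c s'|)
    -- policy value functions, for every policy π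
    (Q : (S → ℕ → A) → ℕ → S → A → ℝ) (V : (S → ℕ → A) → ℕ → S → ℝ)
    (hVend : ∀ π s, V π (H + 1) s = 0)
    (hQ : ∀ π, ∀ h ∈ Finset.Icc 1 H, ∀ s a,
      Q π h s a = r h s a + ∑ s' : S, P h s a s' * V π (h + 1) s')
    (hV : ∀ π, ∀ h ∈ Finset.Icc 1 H, ∀ s, V π h s = Q π h s (π s h))
    -- the fixed data
    (h : ℕ) (hh : h ∈ Finset.Icc 1 H)
    (lam : ℝ) (hlam : 0 < lam)
    (m : ℕ)
    (ss : Fin m → S) (aa : Fin m → A) (ss' : Fin m → S)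
    (V' : S → ℝ) (hV' : ∀ s, V' s ∈ Set.Icc (0 : ℝ) (H : ℝ))
    (Sig : Matrix (Fin d) (Fin d) ℝ)
    (hSig : Sig = lam • (1 : Matrix (Fin d) (Fin d) ℝ)
        + ∑ i : Fin m, Matrix.vecMulVec (φ (ss i) (aa i)) (φ (ss i) (aa i)))
    (b : Fin d → ℝ)
    (hb : b = ∑ i : Fin m, (r h (ss i) (aa i) + V' (ss' i)) • φ (ss i) (aa i))
    (w : Fin d → ℝ) (hw : w = (Sig⁻¹).mulVec b)
    (E : ℝ)
    (hE : E = Real.sqrt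
      ((∑ i : Fin m, (V' (ss' i) - ∑ t : S, P h (ss i) (aa i) t * V' t)
          • φ (ss i) (aa i)) ⬝ᵥ
        (Sig⁻¹).mulVec
          (∑ i : Fin m, (V' (ss' i) - ∑ t : S, P h (ss i) (aa i) t * V' t)
            • φ (ss i) (aa i)))) :
    ∀ π : S → ℕ → A, ∀ s a,
      |w ⬝ᵥ φ s a - Q π h s a
          - ∑ s' : S, P h s a s' * (V' s' - V π (h + 1) s')|
        ≤ (E + 4 * H * Real.sqrt (d * lam))
            * Real.sqrt (φ s a ⬝ᵥ (Sig⁻¹).mulVec (φ s a)) := by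
  intro π s a
  -- notation
  set ψ : Fin m → Fin d → ℝ := fun i => φ (ss i) (aa i) with hψ
  set wbar : Fin d → ℝ := μv h + ∑ t : S, V' t • θ h t with hwbar
  set xv : Fin d → ℝ :=
    ∑ i : Fin m, (V' (ss' i) - ∑ t : S, P h (ss i) (aa i) t * V' t) • φ (ss i) (aa i) with hxv
  have hPD : Sig.PosDef := LinMdpAux.sig_posDef lam hlam ψ Sig hSig
  have hdet : IsUnit Sig.det := hPD.det_pos.ne'.isUnit
  have hPSDinv : (Sig⁻¹).PosSemidef := hPD.inv.posSemidef
  have hherm : (Sig⁻¹).IsHermitian := hPD.inv.isHermitian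
  set K : ℝ := Real.sqrt (φ s a ⬝ᵥ (Sig⁻¹).mulVec (φ s a)) with hK
  have hK0 : 0 ≤ K := Real.sqrt_nonneg _
  -- Key 1 : φ ⬝ wbar = r + P V'
  have key1 : ∀ (s : S) (a : A),
      φ s a ⬝ᵥ wbar = r h s a + ∑ t : S, P h s a t * V' t := by
    intro s a
    rw [hwbar, dotProduct_add, LinMdpAux.dotProduct_sum, hr]
    congr 1
    refine Finset.sum_congr rfl fun t _ => ?_
    rw [dotProduct_smul, hP, smul_eq_mul, mul_comm]
  -- Key C : b - Sig wbar = xv - lam • wbar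
  have keyC : b - Sig.mulVec wbar = xv - lam • wbar := by
    rw [hb, LinMdpAux.sig_mulVec lam ψ Sig hSig wbar]
    have hsum : (∑ i : Fin m, (r h (ss i) (aa i) + V' (ss' i)) • φ (ss i) (aa i))
        - (∑ i : Fin m, (ψ i ⬝ᵥ wbar) • ψ i) = xv := by
      rw [← Finset.sum_sub_distrib, hxv]
      refine Finset.sum_congr rfl fun i _ => ?_
      rw [hψ, key1 (ss i) (aa i), ← sub_smul]
      congr 1
      ring
    rw [← hsum]
    abel
  -- Split w
  have hwsplit : w = wbar + (Sig⁻¹).mulVec (xv - lam • wbar) := by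
    rw [hw, ← keyC]
    have hbsplit : b = Sig.mulVec wbar + (b - Sig.mulVec wbar) := by abel
    calc (Sig⁻¹).mulVec b
        = (Sig⁻¹).mulVec (Sig.mulVec wbar + (b - Sig.mulVec wbar)) := by rw [← hbsplit]
      _ = (Sig⁻¹).mulVec (Sig.mulVec wbar) + (Sig⁻¹).mulVec (b - Sig.mulVec wbar) :=
          mulVec_add _ _ _
      _ = wbar + (Sig⁻¹).mulVec (b - Sig.mulVec wbar) := by
          rw [mulVec_mulVec, Matrix.nonsing_inv_mul _ hdet, one_mulVec]
  -- main identity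
  have hmain : w ⬝ᵥ φ s a - Q π h s a
        - ∑ s' : S, P h s a s' * (V' s' - V π (h + 1) s')
      = ((Sig⁻¹).mulVec xv) ⬝ᵥ φ s a - lam * (((Sig⁻¹).mulVec wbar) ⬝ᵥ φ s a) := by
    rw [hwsplit, hQ π h hh s a, mulVec_sub, mulVec_smul]
    rw [add_dotProduct, sub_dotProduct, smul_dotProduct, smul_eq_mul]
    have h1 : wbar ⬝ᵥ φ s a = r h s a + ∑ t : S, P h s a t * V' t := by
      rw [dotProduct_comm]; exact key1 s a
    rw [h1]
    simp only [mul_sub]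
    rw [Finset.sum_sub_distrib]
    ring
  rw [hmain]
  -- bound term A
  have hA : |((Sig⁻¹).mulVec xv) ⬝ᵥ φ s a| ≤ E * K := by
    rw [LinMdpAux.herm_dot_comm hherm]
    have hcs := LinMdpAux.psd_cauchy_schwarz hPSDinv xv (φ s a)
    rw [hK, hE, hxv]
    exact hcs
  -- bound on wbar euclidean norm
  have hsup : (⨆ t : S, |V' t|) ≤ (H : ℝ) := by
    refine ciSup_le fun t => ?_
    rw [abs_of_nonneg (hV' t).1]
    exact (hV' t).2
  have hwd : Real.sqrt (wbar ⬝ᵥ wbar) ≤ 4 * H * Real.sqrt d := by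
    have ht := LinMdpAux.sqrt_dot_add_le (μv h) (∑ t : S, V' t • θ h t)
    rw [← hwbar] at ht
    have hθ' := hθ h hh V'
    have hθ'' : Real.sqrt ((∑ t : S, V' t • θ h t) ⬝ᵥ (∑ t : S, V' t • θ h t))
        ≤ Real.sqrt d * H :=
      hθ'.trans (mul_le_mul_of_nonneg_left hsup (Real.sqrt_nonneg _))
    have hμ' := hμ h hh
    have hH1 : (1 : ℝ) ≤ H := Nat.one_le_cast.mpr hH
    nlinarith [Real.sqrt_nonneg (d : ℝ), ht]
  -- bound term B
  have hquad : wbar ⬝ᵥ (Sig⁻¹).mulVec wbar ≤ (wbar ⬝ᵥ wbar) / lam :=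
    LinMdpAux.inv_quad_le hPD hlam
      (fun x => by
        rw [LinMdpAux.sig_quad lam ψ Sig hSig x]
        have : 0 ≤ ∑ i : Fin m, (ψ i ⬝ᵥ x) * (ψ i ⬝ᵥ x) :=
          Finset.sum_nonneg fun i _ => mul_self_nonneg _
        linarith) wbar
  have hBq : Real.sqrt (wbar ⬝ᵥ (Sig⁻¹).mulVec wbar)
      ≤ Real.sqrt (wbar ⬝ᵥ wbar) / Real.sqrt lam := by
    have := Real.sqrt_le_sqrt hquad
    rwa [Real.sqrt_div (LinMdpAux.dot_self_nonneg wbar)] at this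
  have hB : |((Sig⁻¹).mulVec wbar) ⬝ᵥ φ s a|
      ≤ (Real.sqrt (wbar ⬝ᵥ wbar) / Real.sqrt lam) * K := by
    rw [LinMdpAux.herm_dot_comm hherm, hK]
    exact (LinMdpAux.psd_cauchy_schwarz hPSDinv wbar (φ s a)).trans
      (mul_le_mul_of_nonneg_right hBq (Real.sqrt_nonneg _))
  have hls : Real.sqrt lam * Real.sqrt lam = lam := Real.mul_self_sqrt hlam.le
  have hsl : (0:ℝ) < Real.sqrt lam := Real.sqrt_pos.mpr hlam
  have h5 : (Real.sqrt lam)⁻¹ * lam = Real.sqrt lam := by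
    rw [← hls]; field_simp; rw [Real.sqrt_sq hsl.le]
  have hlamB : lam * |((Sig⁻¹).mulVec wbar) ⬝ᵥ φ s a|
      ≤ 4 * H * Real.sqrt (d * lam) * K := by
    calc lam * |((Sig⁻¹).mulVec wbar) ⬝ᵥ φ s a|
        ≤ lam * ((Real.sqrt (wbar ⬝ᵥ wbar) / Real.sqrt lam) * K) :=
          mul_le_mul_of_nonneg_left hB hlam.le
      _ = (Real.sqrt (wbar ⬝ᵥ wbar) * K) * ((Real.sqrt lam)⁻¹ * lam) := by ring
      _ = Real.sqrt lam * (Real.sqrt (wbar ⬝ᵥ wbar) * K) := by rw [h5]; ring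
      _ ≤ Real.sqrt lam * ((4 * H * Real.sqrt d) * K) := by
          exact mul_le_mul_of_nonneg_left
            (mul_le_mul_of_nonneg_right hwd hK0) (Real.sqrt_nonneg lam)
      _ = 4 * H * (Real.sqrt d * Real.sqrt lam) * K := by ring
      _ = 4 * H * Real.sqrt (d * lam) * K := by
          rw [← Real.sqrt_mul (Nat.cast_nonneg d)]
  calc |((Sig⁻¹).mulVec xv) ⬝ᵥ φ s a - lam * (((Sig⁻¹).mulVec wbar) ⬝ᵥ φ s a)|
      = |((Sig⁻¹).mulVec xv) ⬝ᵥ φ s a + -(lam * (((Sig⁻¹).mulVec wbar) ⬝ᵥ φ s a))| := by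
        rw [sub_eq_add_neg]
    _ ≤ |((Sig⁻¹).mulVec xv) ⬝ᵥ φ s a| + |-(lam * (((Sig⁻¹).mulVec wbar) ⬝ᵥ φ s a))| :=
        abs_add_le _ _
    _ = |((Sig⁻¹).mulVec xv) ⬝ᵥ φ s a| + lam * |((Sig⁻¹).mulVec wbar) ⬝ᵥ φ s a| := by
        rw [abs_neg, abs_mul, abs_of_pos hlam]
    _ ≤ E * K + 4 * H * Real.sqrt (d * lam) * K := add_le_add hA hlamB
    _ = (E + 4 * H * Real.sqrt (d * lam)) * K := by ring
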